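/- Let 𝓕 be a finite set of finite simple graphs, let G be a finite simple graph containing disjoint sets S, T ⊆ V(G), let k be a natural number, and let C ⊆ V(G) be seclusion-maximal with respect to the property "G[C] is connected, G[C] is 𝓕-free, |N_G(C)| ≤ k, and S ⊆ C ⊆ V(G) \ T". Then for each v ∈ N_G(C), the set C is seclusion-maximal in the graph G − v with respect to the property "(G−v)[C] is connected, (G−v)[C] is 𝓕-free, |N_{G−v}(C)| ≤ k − 1, and S ⊆ C ⊆ V(G − v) \ T". -/

import Mathlib

open SimpleGraph

/-- The open neighborhood of a vertex set `C` in a graph `G`. -/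
def openNbhd {V : Type} (G : SimpleGraph V) (C : Set V) : Set V :=
  {v | v ∉ C ∧ ∃ u ∈ C, G.Adj u v}

/-- `C` is seclusion-maximal for property `Pr`: it satisfies `Pr` and every strict
superset satisfying `Pr` has a strictly larger open neighborhood. -/
def SeclusionMaximal {V : Type} (G : SimpleGraph V) (Pr : Set V → Prop) (C : Set V) : Prop :=
  Pr C ∧ ∀ C' : Set V, C ⊂ C' → Pr C' → (openNbhd G C).ncard < (openNbhd G C').ncard

/-- The graph `G − v`, kept on the same vertex type: all edges incident to `v`
are removed, and vertex sets of `G − v` are the sets avoiding `v`. -/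
def deleteVert {V : Type} (G : SimpleGraph V) (v : V) : SimpleGraph V where
  Adj x y := G.Adj x y ∧ x ≠ v ∧ y ≠ v
  symm := ⟨fun x y h => ⟨h.1.symm, h.2.2, h.2.1⟩⟩
  loopless := ⟨fun x h => G.ne_of_adj h.1 rfl⟩

lemma induce_deleteVert_eq {V : Type} (G : SimpleGraph V) {v : V} {C : Set V}
    (hv : v ∉ C) : (deleteVert G v).induce C = G.induce C := by
  ext ⟨x, hx⟩ ⟨y, hy⟩
  have hxv : x ≠ v := fun h => hv (h ▸ hx)
  have hyv : y ≠ v := fun h => hv (h ▸ hy)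
  simp [deleteVert, hxv, hyv]

lemma openNbhd_deleteVert {V : Type} (G : SimpleGraph V) {v : V} {C : Set V}
    (hv : v ∉ C) : openNbhd (deleteVert G v) C = openNbhd G C \ {v} := by
  ext w
  constructor
  · rintro ⟨hw, u, hu, hadj, huv, hwv⟩
    exact ⟨⟨hw, u, hu, hadj⟩, hwv⟩
  · rintro ⟨⟨hw, u, hu, hadj⟩, hwv⟩
    exact ⟨hw, u, hu, hadj, fun h => hv (h ▸ hu), hwv⟩

theorem stmt9 {V : Type} [Fintype V] {ι : Type} [Fintype ι] {Fv : ι → Type}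
    [∀ i, Fintype (Fv i)] (Gf : ∀ i, SimpleGraph (Fv i))
    (G : SimpleGraph V) (S T : Set V) (hST : Disjoint S T) (k : ℕ) (C : Set V)
    (hC : SeclusionMaximal G (fun D =>
        (G.induce D).Connected ∧
        (∀ i, IsEmpty ((Gf i) ↪g (G.induce D))) ∧
        (openNbhd G D).ncard ≤ k ∧
        S ⊆ D ∧ D ⊆ Tᶜ) C) :
    ∀ v ∈ openNbhd G C,
      SeclusionMaximal (deleteVert G v) (fun D =>
        ((deleteVert G v).induce D).Connected ∧
        (∀ i, IsEmpty ((Gf i) ↪g ((deleteVert G v).induce D))) ∧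
        (openNbhd (deleteVert G v) D).ncard ≤ k - 1 ∧
        S ⊆ D ∧ D ⊆ ({v} ∪ T)ᶜ) C := by
  intro v hv
  obtain ⟨⟨hconn, hfree, hcard, hS, hT⟩, hmax⟩ := hC
  have hvC : v ∉ C := hv.1
  have hNC : openNbhd (deleteVert G v) C = openNbhd G C \ {v} :=
    openNbhd_deleteVert G hvC
  have hCcard : (openNbhd (deleteVert G v) C).ncard + 1 = (openNbhd G C).ncard := by
    rw [hNC]
    exact Set.ncard_diff_singleton_add_one hv (Set.toFinite _)
  constructor
  · refine ⟨?_, ?_, ?_, hS, ?_⟩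
    · rw [induce_deleteVert_eq G hvC]; exact hconn
    · rw [induce_deleteVert_eq G hvC]; exact hfree
    · omega
    · intro x hx
      simp only [Set.mem_compl_iff, Set.mem_union, Set.mem_singleton_iff]
      rintro (rfl | hxT)
      · exact hvC hx
      · exact hT hx hxT
  · intro C' hCC' hC'
    obtain ⟨hconn', hfree', hcard', hS', hT'⟩ := hC'
    have hvC' : v ∉ C' := by
      intro h
      exact hT' h (Or.inl rfl)
    have hNC' : openNbhd (deleteVert G v) C' = openNbhd G C' \ {v} :=
      openNbhd_deleteVert G hvC'
    have hvN' : v ∈ openNbhd G C' := by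
      obtain ⟨u, hu, hadj⟩ := hv.2
      exact ⟨hvC', u, hCC'.1 hu, hadj⟩
    have hC'card : (openNbhd (deleteVert G v) C').ncard + 1 = (openNbhd G C').ncard := by
      rw [hNC']
      exact Set.ncard_diff_singleton_add_one hvN' (Set.toFinite _)
    have hkey : (openNbhd G C).ncard < (openNbhd G C').ncard := by
      apply hmax C' hCC'
      refine ⟨?_, ?_, ?_, hS', ?_⟩
      · rwa [← induce_deleteVert_eq G hvC']
      · rwa [← induce_deleteVert_eq G hvC']
      · have hvk : 1 ≤ k := by
          have : 0 < (openNbhd G C).ncard :=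
            (Set.ncard_pos (Set.toFinite _)).mpr ⟨v, hv⟩
          omega
        omega
      · intro x hx hxT
        exact hT' hx (Or.inr hxT)
    omega
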